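/- Let T be a finite tree rooted at an internal vertex r, whose leaves are enumerated without repetition as c_0, …, c_{k−1} (k ≥ 3). Suppose that for every internal vertex u of T, L^r(u) is cyclically consecutive. Then there exist an index i ∈ {0,…,k−1} and a vertex x such that every vertex of the path in T from c_i to c_{(i+1) mod k} other than c_i, c_{(i+1) mod k} and x has degree 2 in T. -/

import Mathlib

open SimpleGraph Set Function


/-- `u` is an ancestor of `v` with respect to root `r`:
`u` lies on the unique path in `T` from `r` to `v`. -/
def IsAncestor {V : Type*} (T : SimpleGraph V) (r u v : V) : Prop :=
  ∀ p : T.Walk r v, p.IsPath → u ∈ p.support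

/-- `u` is the parent of `v` with respect to root `r`. -/
def IsParent {V : Type*} (T : SimpleGraph V) (r u v : V) : Prop :=
  IsAncestor T r u v ∧ u ≠ v ∧ T.Adj u v

/-- `L^r(u)`: the set of leaves of `T` that are descendants of `u`. -/
def LeafSet {V : Type*} (T : SimpleGraph V) [Fintype V] [DecidableRel T.Adj] (r u : V) :
    Set V :=
  {c | T.degree c = 1 ∧ IsAncestor T r u c}

/-- The leaf `c_{j mod k}` index. -/
def cidx {k : ℕ} (hk : 0 < k) (j : ℕ) : Fin k := ⟨j % k, Nat.mod_lt _ hk⟩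

/-- A set `A` of leaves is cyclically consecutive with respect to the enumeration `c`. -/
def CycConsec {V : Type*} {k : ℕ} (hk : 0 < k) (c : Fin k → V) (A : Set V) : Prop :=
  ∃ j m : ℕ, A = {x | ∃ t ≤ m, x = c (cidx hk (j + t))}

namespace Stmt3Aux

variable {V : Type*} {T : SimpleGraph V}

lemma path_eq' (hT : T.IsTree) {u v : V} {p q : T.Walk u v} (hp : p.IsPath) (hq : q.IsPath) :
    p = q := (hT.existsUnique_path u v).unique hp hq

lemma length_eq_dist (hT : T.IsTree) {u v : V} {p : T.Walk u v} (hp : p.IsPath) :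
    p.length = T.dist u v := by
  obtain ⟨q, hq, hlen⟩ := hT.isConnected.exists_path_of_dist u v
  rw [path_eq' hT hp hq, hlen]

lemma exists_snd {u v : V} (q : T.Walk u v) (h : u ≠ v) :
    ∃ (s : V) (ha : T.Adj u s) (q' : T.Walk s v), q = Walk.cons ha q' := by
  cases q with
  | nil => exact absurd rfl h
  | cons ha q' => exact ⟨_, ha, q', rfl⟩

lemma end_mem_takeUntil [DecidableEq V] {u v w : V} {p : T.Walk u v} (hp : p.IsPath)
    (hw : w ∈ p.support) (hv : v ∈ (p.takeUntil w hw).support) : v = w := by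
  by_contra hne
  have hsp := hp.support_nodup
  rw [← p.take_spec hw, Walk.support_append] at hsp
  have hv2 : v ∈ (p.dropUntil w hw).support.tail := by
    rcases List.mem_cons.mp
        (by rw [← Walk.support_eq_cons]; exact Walk.end_mem_support _ :
          v ∈ w :: (p.dropUntil w hw).support.tail) with h | h
    · exact absurd h hne
    · exact h
  exact (List.disjoint_of_nodup_append hsp) hv hv2

lemma isPath_append_edge {u v s : V} {p : T.Walk u v} (hp : p.IsPath) (h : T.Adj v s)
    (hs : s ∉ p.support) : (p.append (Walk.cons h Walk.nil)).IsPath := by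
  rw [Walk.isPath_def, Walk.support_append]
  simp only [Walk.support_cons, Walk.support_nil, List.tail_cons]
  refine List.Nodup.append hp.support_nodup (by simp) ?_
  intro z hz hz2
  simp only [List.mem_singleton] at hz2
  exact hs (hz2 ▸ hz)

lemma not_mem_of_append_edge_isPath {u v s : V} {p : T.Walk u v} {h : T.Adj v s}
    (hp : (p.append (Walk.cons h Walk.nil)).IsPath) : s ∉ p.support := by
  intro hmem
  have hnd := hp.support_nodup
  rw [Walk.support_append] at hnd
  exact (List.disjoint_of_nodup_append hnd) hmem (by simp)

lemma exists_succ [DecidableEq V] {b x w : V} {q : T.Walk b x} (hq : q.IsPath)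
    (hw : w ∈ q.support) (hwx : w ≠ x) :
    ∃ (s : V) (ha : T.Adj w s), s ∈ q.support ∧
      ((q.takeUntil w hw).append (Walk.cons ha Walk.nil)).IsPath := by
  obtain ⟨s, ha, d, hd⟩ := exists_snd (q.dropUntil w hw) hwx
  refine ⟨s, ha, ?_, ?_⟩
  · apply Walk.support_dropUntil_subset q hw
    rw [hd, Walk.support_cons]
    exact List.mem_cons_of_mem _ d.start_mem_support
  · have h3 : ((q.takeUntil w hw).append (Walk.cons ha Walk.nil)).append d = q := by
      rw [← Walk.append_assoc, Walk.cons_append, Walk.nil_append, ← hd]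
      exact q.take_spec hw
    have hq' := hq
    rw [← h3] at hq'
    exact hq'.of_append_left

lemma exists_pred [DecidableEq V] {b x w : V} {q : T.Walk b x} (hq : q.IsPath)
    (hw : w ∈ q.support) (hwb : w ≠ b) :
    ∃ a : V, T.Adj w a ∧ a ∈ (q.takeUntil w hw).support ∧ a ≠ w := by
  obtain ⟨a, ha, d, hd⟩ := exists_snd (q.takeUntil w hw).reverse hwb
  have hrev : ((q.takeUntil w hw).reverse).IsPath := (hq.takeUntil hw).reverse
  rw [hd, Walk.cons_isPath_iff] at hrev
  refine ⟨a, ha, ?_, fun h => hrev.2 (h ▸ d.start_mem_support)⟩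
  have : a ∈ (q.takeUntil w hw).reverse.support := by
    rw [hd, Walk.support_cons]
    exact List.mem_cons_of_mem _ d.start_mem_support
  rwa [Walk.support_reverse, List.mem_reverse] at this

lemma interior_two_neighbors {u v w : V} {p : T.Walk u v} (hp : p.IsPath) (hw : w ∈ p.support)
    (hwu : w ≠ u) (hwv : w ≠ v) : ∃ a s : V, a ≠ s ∧ T.Adj w a ∧ T.Adj w s := by
  classical
  obtain ⟨a, ha, hamem, _⟩ := exists_pred hp hw hwu
  obtain ⟨s, hs, _, hpath⟩ := exists_succ hp hw hwv
  refine ⟨a, s, fun h => ?_, ha, hs⟩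
  exact (not_mem_of_append_edge_isPath hpath) (h ▸ hamem)

lemma two_le_degree [Fintype V] [DecidableRel T.Adj] {w a s : V} (h1 : T.Adj w a)
    (h2 : T.Adj w s) (hne : a ≠ s) : 2 ≤ T.degree w := by
  have : 1 < (T.neighborFinset w).card :=
    Finset.one_lt_card.mpr ⟨a, by simpa using h1, s, by simpa using h2, hne⟩
  rwa [T.card_neighborFinset_eq_degree] at this

lemma three_le_degree [Fintype V] [DecidableRel T.Adj] {w a s t : V} (h1 : T.Adj w a)
    (h2 : T.Adj w s) (h3 : T.Adj w t) (h12 : a ≠ s) (h13 : a ≠ t) (h23 : s ≠ t) :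
    3 ≤ T.degree w := by
  have : 2 < (T.neighborFinset w).card :=
    Finset.two_lt_card.mpr ⟨a, by simpa using h1, s, by simpa using h2, t, by simpa using h3,
      h12, h13, h23⟩
  rwa [T.card_neighborFinset_eq_degree] at this

lemma append_takeUntil_isPath [DecidableEq V] {r b x w : V} {A : T.Walk r b} {D : T.Walk b x}
    (h : (A.append D).IsPath) (hw : w ∈ D.support) :
    (A.append (D.takeUntil w hw)).IsPath := by
  rw [← D.take_spec hw, Walk.append_assoc] at h
  exact h.of_append_left

lemma adj_end_unique (hT : T.IsTree) {r v : V} {Q : T.Walk r v} (hQ : Q.IsPath) {z1 z2 : V}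
    (h1 : z1 ∈ Q.support) (h2 : z2 ∈ Q.support) (hz1 : z1 ≠ v) (hz2 : z2 ≠ v)
    (a1 : T.Adj z1 v) (a2 : T.Adj z2 v) : z1 = z2 := by
  classical
  have key : ∀ (z : V) (hz : z ∈ Q.support), z ≠ v → ∀ (az : T.Adj z v),
      Q.reverse.getVert 1 = z := by
    intro z hz hzv az
    have hvt : v ∉ (Q.takeUntil z hz).support := fun h => hzv (end_mem_takeUntil hQ hz h).symm
    have hP : ((Q.takeUntil z hz).append (Walk.cons az Walk.nil)).IsPath :=
      isPath_append_edge (hQ.takeUntil hz) az hvt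
    have hEq : Q = (Q.takeUntil z hz).append (Walk.cons az Walk.nil) := path_eq' hT hQ hP
    rw [hEq, Walk.getVert_reverse, Walk.length_append]
    simp only [Walk.length_cons, Walk.length_nil, Nat.zero_add]
    have harith : (Q.takeUntil z hz).length + 1 - 1 = (Q.takeUntil z hz).length := by omega
    rw [harith, Walk.getVert_append, if_neg (lt_irrefl _), Nat.sub_self]
    exact Walk.getVert_zero _
  exact (key z1 h1 hz1 a1).symm.trans (key z2 h2 hz2 a2)

lemma succ_getVert {r b x v : V} (A : T.Walk r b) (h : T.Adj b v) (R : T.Walk v x) :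
    (A.append (Walk.cons h R)).getVert (A.length + 1) = v := by
  rw [Walk.getVert_append, if_neg (by omega)]
  have : A.length + 1 - A.length = 1 := by omega
  rw [this]
  exact Walk.getVert_zero R

lemma extend_to_leaf [Fintype V] [DecidableRel T.Adj] (hT : T.IsTree)
    (hdeg : ∀ v : V, T.degree v ≠ 1 → ∃ a b : V, a ≠ b ∧ T.Adj v a ∧ T.Adj v b) :
    ∀ (n : ℕ) (r v : V) (Q : T.Walk r v), Q.IsPath → Fintype.card V ≤ Q.length + n →
      ∃ (x : V) (R : T.Walk v x), T.degree x = 1 ∧ (Q.append R).IsPath := by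
  intro n
  induction n with
  | zero => intro r v Q hQ hle; exact absurd hQ.length_lt (by omega)
  | succ n ih =>
    intro r v Q hQ hle
    by_cases hv : T.degree v = 1
    · exact ⟨v, Walk.nil, hv, by simpa using hQ⟩
    · obtain ⟨a, b, hab, ha, hb⟩ := hdeg v hv
      have hone : a ∉ Q.support ∨ b ∉ Q.support := by
        by_contra hcon
        push_neg at hcon
        exact hab (adj_end_unique hT hQ hcon.1 hcon.2 ha.ne' hb.ne' ha.symm hb.symm)
      obtain ⟨s, hs, hsmem⟩ : ∃ s, T.Adj v s ∧ s ∉ Q.support := by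
        rcases hone with h | h
        exacts [⟨a, ha, h⟩, ⟨b, hb, h⟩]
      have hQ' : (Q.append (Walk.cons hs Walk.nil)).IsPath := isPath_append_edge hQ hs hsmem
      obtain ⟨x, R, hx, hR⟩ := ih r s (Q.append (Walk.cons hs Walk.nil)) hQ'
        (by rw [Walk.length_append]; simp only [Walk.length_cons, Walk.length_nil]; omega)
      refine ⟨x, Walk.cons hs R, hx, ?_⟩
      rwa [← Walk.append_assoc, Walk.cons_append, Walk.nil_append] at hR


lemma exists_deg3 [Fintype V] [DecidableRel T.Adj] (hT : T.IsTree) {k : ℕ} (hk : 3 ≤ k)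
    (c : Fin k → V) (hinj : Function.Injective c)
    (hleaf : ∀ v : V, T.degree v = 1 ↔ ∃ i, v = c i) :
    ∃ b : V, 3 ≤ T.degree b := by
  classical
  by_contra hcon
  push_neg at hcon
  have hsum := T.sum_degrees_eq_twice_card_edges
  have hcard := hT.card_edgeFinset
  have hFk : (Finset.univ.filter (fun v => T.degree v = 1)).card = k := by
    have hF : (Finset.univ.filter (fun v => T.degree v = 1)) = Finset.image c Finset.univ := by
      ext v
      simp only [Finset.mem_filter, Finset.mem_univ, true_and, Finset.mem_image, hleaf v]
      exact exists_congr fun i => eq_comm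
    rw [hF, Finset.card_image_of_injective _ hinj, Finset.card_univ, Fintype.card_fin]
  have hsplit := Finset.sum_filter_add_sum_filter_not Finset.univ (fun v => T.degree v = 1)
    (fun v => T.degree v)
  have h1 : ∑ v ∈ Finset.univ.filter (fun v => T.degree v = 1), T.degree v
      = (Finset.univ.filter (fun v => T.degree v = 1)).card := by
    rw [Finset.sum_congr rfl (fun v hv => (Finset.mem_filter.mp hv).2), Finset.sum_const,
      smul_eq_mul, mul_one]
  have h2 : ∑ v ∈ Finset.univ.filter (fun v => ¬ T.degree v = 1), T.degree v
      ≤ (Finset.univ.filter (fun v => ¬ T.degree v = 1)).card * 2 := by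
    have := Finset.sum_le_card_nsmul (Finset.univ.filter (fun v => ¬ T.degree v = 1))
      (fun v => T.degree v) 2 (fun x _ => by show T.degree x ≤ 2; have := hcon x; omega)
    simpa using this
  have h3 := Finset.card_filter_add_card_filter_not
    (s := (Finset.univ : Finset V)) (p := fun v => T.degree v = 1)
  rw [Finset.card_univ] at h3
  rw [← hsplit, h1, hFk] at hsum
  omega


lemma cidx_succ' {k : ℕ} (hk0 : 0 < k) (hk1 : 1 < k) (j : ℕ) :
    cidx hk0 ((cidx hk0 j : ℕ) + 1) = cidx hk0 (j + 1) := by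
  apply Fin.ext
  show (j % k + 1) % k = (j + 1) % k
  conv_rhs => rw [Nat.add_mod]
  rw [Nat.mod_eq_of_lt hk1]

lemma cidx_ne_succ {k : ℕ} (hk0 : 0 < k) (hk1 : 1 < k) (j : ℕ) :
    cidx hk0 j ≠ cidx hk0 (j + 1) := by
  intro h
  have h' : j % k = (j + 1) % k := congrArg Fin.val h
  rw [Nat.add_mod, Nat.mod_eq_of_lt hk1] at h'
  have hlt : j % k < k := Nat.mod_lt _ hk0
  rcases Nat.lt_or_ge (j % k + 1) k with hc | hc
  · rw [Nat.mod_eq_of_lt hc] at h'; omega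
  · have hkk : j % k + 1 = k := by omega
    rw [hkk, Nat.mod_self] at h'
    omega

end Stmt3Aux

open Stmt3Aux in
/-- If `T` is rooted at an internal vertex `r` and each `L^r(u)` is
cyclically consecutive, then there is an index `i` and a vertex `x` such that every
vertex on the path from `c_i` to `c_{(i+1) mod k}` other than the endpoints and `x`
has degree 2 in `T`. -/
theorem stmt3 {V : Type*} [Fintype V] (T : SimpleGraph V) [DecidableRel T.Adj]
    (hT : T.IsTree) {k : ℕ} (hk : 3 ≤ k) (c : Fin k → V)
    (hinj : Function.Injective c)
    (hleaf : ∀ v : V, T.degree v = 1 ↔ ∃ i : Fin k, v = c i)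
    (r : V) (hrint : 2 ≤ T.degree r)
    (hcyc : ∀ u : V, 2 ≤ T.degree u → CycConsec (by omega) c (LeafSet T r u)) :
    ∃ (i : Fin k) (x : V),
      ∀ p : T.Walk (c i) (c (cidx (by omega) ((i : ℕ) + 1))), p.IsPath →
        ∀ w ∈ p.support, w ≠ c i → w ≠ c (cidx (by omega) ((i : ℕ) + 1)) → w ≠ x →
          T.degree w = 2 := by
  classical
  have hk0 : 0 < k := by omega
  -- every vertex has positive degree
  have hdeg1 : ∀ v : V, 0 < T.degree v := by
    intro v
    rw [T.degree_pos_iff_exists_adj]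
    have hvw : ∃ w : V, w ≠ v := by
      by_cases h : v = c ⟨0, by omega⟩
      · refine ⟨c ⟨1, by omega⟩, fun he => ?_⟩
        rw [h] at he
        have := hinj he
        simp at this
      · exact ⟨c ⟨0, by omega⟩, fun he => h he.symm⟩
    obtain ⟨w, hw⟩ := hvw
    obtain ⟨p⟩ := hT.isConnected.preconnected v w
    obtain ⟨s, hs, -, -⟩ := exists_snd p (Ne.symm hw)
    exact ⟨s, hs⟩
  have hdeg2 : ∀ v : V, T.degree v ≠ 1 → ∃ a b : V, a ≠ b ∧ T.Adj v a ∧ T.Adj v b := by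
    intro v hv
    have h2 : 1 < (T.neighborFinset v).card := by
      rw [T.card_neighborFinset_eq_degree]
      have := hdeg1 v
      omega
    obtain ⟨a, ha, b, hb, hab⟩ := Finset.one_lt_card.mp h2
    exact ⟨a, b, hab, by simpa using ha, by simpa using hb⟩
  -- branch vertex at maximal distance from r
  obtain ⟨b0, hb0⟩ := exists_deg3 hT hk c hinj hleaf
  obtain ⟨b, hbmem, hbmax0⟩ := Finset.exists_max_image
    (Finset.univ.filter (fun v => 3 ≤ T.degree v)) (fun v => T.dist r v)
    ⟨b0, by simp [hb0]⟩
  rw [Finset.mem_filter] at hbmem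
  have hbdeg : 3 ≤ T.degree b := hbmem.2
  have hbmax : ∀ w, 3 ≤ T.degree w → T.dist r w ≤ T.dist r b := fun w hw =>
    hbmax0 w (by simp [hw])
  obtain ⟨A, hA, hAlen⟩ := hT.isConnected.exists_path_of_dist r b
  -- two downward neighbors of b
  have huniq : ∀ z1 z2 : V, z1 ∈ A.support → z2 ∈ A.support → T.Adj b z1 → T.Adj b z2 →
      z1 = z2 := fun z1 z2 m1 m2 a1 a2 =>
    adj_end_unique hT hA m1 m2 a1.ne' a2.ne' a1.symm a2.symm
  have h2lt : 2 < (T.neighborFinset b).card := by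
    rw [T.card_neighborFinset_eq_degree]; omega
  obtain ⟨u1, hu1, u2, hu2, u3, hu3, h12, h13, h23⟩ := Finset.two_lt_card.mp h2lt
  rw [SimpleGraph.mem_neighborFinset] at hu1 hu2 hu3
  obtain ⟨v1, v2, hv12, hadj1, hadj2, hm1, hm2⟩ :
      ∃ v1 v2 : V, v1 ≠ v2 ∧ T.Adj b v1 ∧ T.Adj b v2 ∧ v1 ∉ A.support ∧ v2 ∉ A.support := by
    by_cases m1 : u1 ∈ A.support
    · refine ⟨u2, u3, h23, hu2, hu3, fun m => ?_, fun m => ?_⟩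
      · exact h12 (huniq u1 u2 m1 m hu1 hu2)
      · exact h13 (huniq u1 u3 m1 m hu1 hu3)
    · by_cases m2 : u2 ∈ A.support
      · refine ⟨u1, u3, h13, hu1, hu3, m1, fun m => ?_⟩
        exact h23 (huniq u2 u3 m2 m hu2 hu3)
      · exact ⟨u1, u2, h12, hu1, hu2, m1, m2⟩
  -- extend to two distinct leaves below b
  have hQ1 : (A.append (Walk.cons hadj1 Walk.nil)).IsPath := isPath_append_edge hA hadj1 hm1
  have hQ2 : (A.append (Walk.cons hadj2 Walk.nil)).IsPath := isPath_append_edge hA hadj2 hm2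
  obtain ⟨x1, R1, hx1leaf, hR1⟩ := extend_to_leaf hT hdeg2 (Fintype.card V) r v1 _ hQ1 (by omega)
  obtain ⟨x2, R2, hx2leaf, hR2⟩ := extend_to_leaf hT hdeg2 (Fintype.card V) r v2 _ hQ2 (by omega)
  rw [← Walk.append_assoc, Walk.cons_append, Walk.nil_append] at hR1
  rw [← Walk.append_assoc, Walk.cons_append, Walk.nil_append] at hR2
  have hanc1 : IsAncestor T r b x1 := fun p hp => by
    rw [path_eq' hT hp hR1]
    exact (Walk.mem_support_append_iff _ _).mpr (Or.inl A.end_mem_support)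
  have hanc2 : IsAncestor T r b x2 := fun p hp => by
    rw [path_eq' hT hp hR2]
    exact (Walk.mem_support_append_iff _ _).mpr (Or.inl A.end_mem_support)
  have hx12 : x1 ≠ x2 := by
    intro h
    subst h
    have hPP : A.append (Walk.cons hadj1 R1) = A.append (Walk.cons hadj2 R2) :=
      path_eq' hT hR1 hR2
    have hg1 := succ_getVert A hadj1 R1
    have hg2 := succ_getVert A hadj2 R2
    rw [hPP] at hg1
    exact hv12 (hg1.symm.trans hg2)
  -- the two leaves are in L(b); use cyclic consecutiveness
  have hx1L : x1 ∈ LeafSet T r b := ⟨hx1leaf, hanc1⟩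
  have hx2L : x2 ∈ LeafSet T r b := ⟨hx2leaf, hanc2⟩
  obtain ⟨j, m, hLb⟩ := hcyc b (by omega)
  rw [hLb] at hx1L hx2L
  simp only [Set.mem_setOf_eq] at hx1L hx2L
  obtain ⟨t1', ht1m, hx1eq⟩ := hx1L
  obtain ⟨t2', ht2m, hx2eq⟩ := hx2L
  have hm : 1 ≤ m := by
    by_contra hm0
    push_neg at hm0
    apply hx12
    have e1 : t1' = 0 := by omega
    have e2 : t2' = 0 := by omega
    rw [hx1eq, hx2eq, e1, e2]
  set i : Fin k := cidx hk0 j with hidef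
  have hij : c (cidx hk0 ((i : ℕ) + 1)) = c (cidx hk0 (j + 1)) := by
    rw [hidef, cidx_succ' hk0 (by omega) j]
  have hcij : c i ≠ c (cidx hk0 ((i : ℕ) + 1)) := by
    rw [hij, hidef]
    exact fun h => cidx_ne_succ hk0 (by omega) j (hinj h)
  have hciL : c i ∈ LeafSet T r b := by
    rw [hLb]; exact ⟨0, Nat.zero_le m, rfl⟩
  have hcjL : c (cidx hk0 ((i : ℕ) + 1)) ∈ LeafSet T r b := by
    rw [hij, hLb]; exact ⟨1, hm, rfl⟩
  obtain ⟨hcideg, hcianc⟩ := hciL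
  obtain ⟨hcjdeg, hcjanc⟩ := hcjL
  have hbci : b ≠ c i := fun h => by rw [← h] at hcideg; omega
  have hbcj : b ≠ c (cidx hk0 ((i : ℕ) + 1)) := fun h => by rw [← h] at hcjdeg; omega
  -- the pendant paths from b to the two consecutive leaves
  obtain ⟨W1, hW1, -⟩ := hT.isConnected.exists_path_of_dist r (c i)
  obtain ⟨W2, hW2, -⟩ := hT.isConnected.exists_path_of_dist r (c (cidx hk0 ((i : ℕ) + 1)))
  have hb1 : b ∈ W1.support := hcianc W1 hW1
  have hb2 : b ∈ W2.support := hcjanc W2 hW2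
  have htake1 : W1.takeUntil b hb1 = A := path_eq' hT (hW1.takeUntil hb1) hA
  have htake2 : W2.takeUntil b hb2 = A := path_eq' hT (hW2.takeUntil hb2) hA
  set t1 : T.Walk b (c i) := W1.dropUntil b hb1 with ht1def
  set t2 : T.Walk b (c (cidx hk0 ((i : ℕ) + 1))) := W2.dropUntil b hb2 with ht2def
  have hspec1 : A.append t1 = W1 := by
    rw [ht1def, ← htake1]; exact W1.take_spec hb1
  have hspec2 : A.append t2 = W2 := by
    rw [ht2def, ← htake2]; exact W2.take_spec hb2
  have hAt1 : (A.append t1).IsPath := by rw [hspec1]; exact hW1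
  have hAt2 : (A.append t2).IsPath := by rw [hspec2]; exact hW2
  have ht1path : t1.IsPath := hAt1.of_append_right
  have ht2path : t2.IsPath := hAt2.of_append_right
  -- the only common vertex of t1 and t2 is b
  obtain ⟨w0, hw0S, hw0max⟩ := Finset.exists_max_image
    (t1.support.toFinset ∩ t2.support.toFinset) (fun v => T.dist b v)
    ⟨b, by rw [Finset.mem_inter, List.mem_toFinset, List.mem_toFinset]
           exact ⟨t1.start_mem_support, t2.start_mem_support⟩⟩
  rw [Finset.mem_inter, List.mem_toFinset, List.mem_toFinset] at hw0S
  have hw0b : w0 = b := by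
    by_contra hne
    have hwci : w0 ≠ c i := by
      intro h
      rw [h] at hw0S
      obtain ⟨a, s, has, haa, hss⟩ :=
        interior_two_neighbors ht2path hw0S.2 (Ne.symm hbci) hcij
      have := two_le_degree haa hss has
      omega
    have hwcj : w0 ≠ c (cidx hk0 ((i : ℕ) + 1)) := by
      intro h
      rw [h] at hw0S
      obtain ⟨a, s, has, haa, hss⟩ :=
        interior_two_neighbors ht1path hw0S.1 (Ne.symm hbcj) (Ne.symm hcij)
      have := two_le_degree haa hss has
      omega
    obtain ⟨a, haa, hamem, -⟩ := exists_pred ht1path hw0S.1 hne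
    obtain ⟨s1, hs1, hs1mem, hp1⟩ := exists_succ ht1path hw0S.1 hwci
    obtain ⟨s2, hs2, hs2mem, hp2⟩ := exists_succ ht2path hw0S.2 hwcj
    have hteq : t1.takeUntil w0 hw0S.1 = t2.takeUntil w0 hw0S.2 :=
      path_eq' hT (ht1path.takeUntil _) (ht2path.takeUntil _)
    have hdw : (t1.takeUntil w0 hw0S.1).length = T.dist b w0 :=
      length_eq_dist hT (ht1path.takeUntil _)
    have hdw2 : (t2.takeUntil w0 hw0S.2).length = T.dist b w0 :=
      length_eq_dist hT (ht2path.takeUntil _)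
    have hds1 : T.dist b s1 = T.dist b w0 + 1 := by
      have hl := length_eq_dist hT hp1
      rw [Walk.length_append] at hl
      simp only [Walk.length_cons, Walk.length_nil] at hl
      omega
    have hds2 : T.dist b s2 = T.dist b w0 + 1 := by
      have hl := length_eq_dist hT hp2
      rw [Walk.length_append] at hl
      simp only [Walk.length_cons, Walk.length_nil] at hl
      omega
    by_cases hss : s1 = s2
    · subst hss
      have hsS : s1 ∈ t1.support.toFinset ∩ t2.support.toFinset := by
        rw [Finset.mem_inter, List.mem_toFinset, List.mem_toFinset]
        exact ⟨hs1mem, hs2mem⟩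
      have hle : T.dist b s1 ≤ T.dist b w0 := hw0max s1 hsS
      omega
    · have hns1 : s1 ∉ (t1.takeUntil w0 hw0S.1).support := not_mem_of_append_edge_isPath hp1
      have hns2 : s2 ∉ (t1.takeUntil w0 hw0S.1).support := by
        rw [hteq]; exact not_mem_of_append_edge_isPath hp2
      have hdeg3 : 3 ≤ T.degree w0 :=
        three_le_degree haa hs1 hs2 (fun h => hns1 (h ▸ hamem)) (fun h => hns2 (h ▸ hamem)) hss
      have hdrw : T.dist r w0 = T.dist r b + T.dist b w0 := by
        have hP := append_takeUntil_isPath hAt1 hw0S.1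
        have hl := length_eq_dist hT hP
        rw [Walk.length_append] at hl
        rw [← hl, ← hAlen, ← hdw]
      have hmax := hbmax w0 hdeg3
      have hpos : 0 < T.dist b w0 := hT.isConnected.pos_dist_of_ne (Ne.symm hne)
      omega
  have honly : ∀ z : V, z ∈ t1.support → z ∈ t2.support → z = b := by
    intro z h1z h2z
    have hzS : z ∈ t1.support.toFinset ∩ t2.support.toFinset := by
      rw [Finset.mem_inter, List.mem_toFinset, List.mem_toFinset]; exact ⟨h1z, h2z⟩
    have hle : T.dist b z ≤ T.dist b w0 := hw0max z hzS
    rw [hw0b] at hle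
    simp only [SimpleGraph.dist_self] at hle
    have hz0 : T.dist b z = 0 := by omega
    exact ((hT.isConnected.dist_eq_zero_iff).mp hz0).symm
  -- the combined path
  have hq : (t1.reverse.append t2).IsPath := by
    rw [Walk.isPath_def, Walk.support_append]
    have ht2nd : t2.support.Nodup := ht2path.support_nodup
    have ht2nd' : (b :: t2.support.tail).Nodup := by rw [← Walk.support_eq_cons]; exact ht2nd
    have hbt2 : b ∉ t2.support.tail := (List.nodup_cons.mp ht2nd').1
    refine List.Nodup.append ht1path.reverse.support_nodup (List.nodup_cons.mp ht2nd').2 ?_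
    intro z hz1 hz2
    rw [Walk.support_reverse, List.mem_reverse] at hz1
    have hz2' : z ∈ t2.support := List.mem_of_mem_tail hz2
    exact hbt2 ((honly z hz1 hz2') ▸ hz2)
  -- key degree claim for pendant paths
  have key : ∀ (x : V) (t : T.Walk b x), (A.append t).IsPath →
      ∀ w ∈ t.support, w ≠ b → w ≠ x → T.degree w = 2 := by
    intro x t ht w hwmem hwb hwx
    have htp : t.IsPath := ht.of_append_right
    obtain ⟨a, s, has, haa, hss⟩ := interior_two_neighbors htp hwmem hwb hwx
    have h2 : 2 ≤ T.degree w := two_le_degree haa hss has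
    have h3 : ¬ 3 ≤ T.degree w := by
      intro hcon
      have hmax := hbmax w hcon
      have hP := append_takeUntil_isPath ht hwmem
      have hl := length_eq_dist hT hP
      rw [Walk.length_append] at hl
      have hdw' := length_eq_dist hT (htp.takeUntil hwmem)
      have hpos : 0 < T.dist b w := hT.isConnected.pos_dist_of_ne (Ne.symm hwb)
      omega
    omega
  -- conclusion
  refine ⟨i, b, ?_⟩
  intro p hp w hwmem hw1 hw2 hwb
  have hpq : p = t1.reverse.append t2 := path_eq' hT hp hq
  rw [hpq] at hwmem
  rcases (Walk.mem_support_append_iff _ _).mp hwmem with hmem | hmem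
  · rw [Walk.support_reverse, List.mem_reverse] at hmem
    exact key (c i) t1 hAt1 w hmem hwb hw1
  · exact key _ t2 hAt2 w hmem hwb hw2
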